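/- For every N ≥ 4, the N×N signed identity matrix (the matrix with +1 on the diagonal and −1 off the diagonal) has VC dimension equal to one and sign rank equal to 3. -/

import Mathlib

open Matrix Real

/-- A set `T` of columns of `S` is shattered if every sign pattern on `T` occurs as the
restriction of some row of `S` to `T`. -/
def Shattered {R C : Type*} (S : Matrix R C ℝ) (T : Finset C) : Prop :=
  ∀ v : C → ℝ, (∀ c ∈ T, v c = 1 ∨ v c = -1) → ∃ r : R, ∀ c ∈ T, S r c = v c

/-- The VC dimension of a sign matrix: the maximum size of a shattered set of columns. -/
noncomputable def VCdim {R C : Type*} (S : Matrix R C ℝ) : ℕ :=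
  sSup {k | ∃ T : Finset C, T.card = k ∧ Shattered S T}

/-- The sign rank of a sign matrix `S`: the minimum rank of a real matrix `M` (with no zero
entries) such that `M i j * S i j > 0` for all `i, j`. -/
noncomputable def signRank {R C : Type*} [Fintype R] [Fintype C]
    (S : Matrix R C ℝ) : ℕ :=
  sInf {k | ∃ M : Matrix R C ℝ, (∀ i j, 0 < M i j * S i j) ∧ M.rank = k}

/-- Key planar lemma: there are no 4 pairs of vectors in the plane realizing the
signed-identity sign pattern. -/
lemma planar_key {A B C D : Fin 4 → ℝ}
    (hd : ∀ s, 0 < A s * C s + B s * D s)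
    (ho : ∀ s t, s ≠ t → A s * C t + B s * D t < 0) : False := by
  -- all cross products of the x-vectors are nonzero
  have hnz : ∀ s t : Fin 4, s ≠ t → A s * B t - B s * A t ≠ 0 := by
    intro s t hst h0
    obtain ⟨r, hrs, hrt⟩ := (by decide : ∀ s t : Fin 4, ∃ r, r ≠ s ∧ r ≠ t) s t
    have hxs : A s ≠ 0 ∨ B s ≠ 0 := by
      by_contra hc
      push_neg at hc
      have := hd s
      rw [hc.1, hc.2] at this
      simp at this
    obtain ⟨k, hA, hB⟩ : ∃ k, A t = k * A s ∧ B t = k * B s := by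
      rcases hxs with h | h
      · refine ⟨A t / A s, by field_simp, ?_⟩
        field_simp
        nlinarith [h0]
      · refine ⟨B t / B s, ?_, by field_simp⟩
        field_simp
        nlinarith [h0]
    have h1 : A t * C r + B t * D r = k * (A s * C r + B s * D r) := by
      rw [hA, hB]; ring
    have h2 := ho t r (fun h => hrt h.symm)
    have h3 := ho s r (fun h => hrs h.symm)
    have hk : 0 < k := by nlinarith
    have h4 := ho s t hst
    have h5 := hd t
    have h6 : A t * C t + B t * D t = k * (A s * C t + B s * D t) := by
      rw [hA, hB]; ring
    nlinarith
  -- final contradiction from a good triple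
  have final : ∀ p q r : Fin 4, p ≠ r → q ≠ r →
      0 < A p * B q - B p * A q → 0 < A r * B q - B r * A q →
      0 < A p * B r - B p * A r → False := by
    intro p q r hpr hqr hpq hrq hpr'
    have key : (A p * B q - B p * A q) * (A r * C r + B r * D r)
        = (A r * B q - B r * A q) * (A p * C r + B p * D r)
        + (A p * B r - B p * A r) * (A q * C r + B q * D r) := by ring
    have e1 := ho p r hpr
    have e2 := ho q r hqr
    have e3 := hd r
    nlinarith [mul_pos hpq e3, mul_neg_of_pos_of_neg hrq e1, mul_neg_of_pos_of_neg hpr' e2]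
  -- a vertex beating two others gives a good triple
  have win : ∀ p q r : Fin 4, p ≠ q → p ≠ r → q ≠ r →
      0 < A p * B q - B p * A q → 0 < A p * B r - B p * A r → False := by
    intro p q r hpq hpr hqr h1 h2
    rcases lt_or_gt_of_ne (hnz r q (Ne.symm hqr)) with hneg | hpos
    · exact final p r q hpq (Ne.symm hqr) h2 (by linarith) h1
    · exact final p q r hpr hqr h1 hpos h2
  rcases lt_or_gt_of_ne (hnz 0 1 (by decide)) with h01 | h01 <;>
    rcases lt_or_gt_of_ne (hnz 0 2 (by decide)) with h02 | h02 <;>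
      rcases lt_or_gt_of_ne (hnz 0 3 (by decide)) with h03 | h03
  · rcases lt_or_gt_of_ne (hnz 1 2 (by decide)) with h12 | h12
    · exact win 2 1 0 (by decide) (by decide) (by decide) (by linarith) (by linarith)
    · exact win 1 2 0 (by decide) (by decide) (by decide) h12 (by linarith)
  · rcases lt_or_gt_of_ne (hnz 1 2 (by decide)) with h12 | h12
    · exact win 2 1 0 (by decide) (by decide) (by decide) (by linarith) (by linarith)
    · exact win 1 2 0 (by decide) (by decide) (by decide) h12 (by linarith)
  · rcases lt_or_gt_of_ne (hnz 1 3 (by decide)) with h13 | h13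
    · exact win 3 1 0 (by decide) (by decide) (by decide) (by linarith) (by linarith)
    · exact win 1 3 0 (by decide) (by decide) (by decide) h13 (by linarith)
  · exact win 0 2 3 (by decide) (by decide) (by decide) h02 h03
  · rcases lt_or_gt_of_ne (hnz 2 3 (by decide)) with h23 | h23
    · exact win 3 2 0 (by decide) (by decide) (by decide) (by linarith) (by linarith)
    · exact win 2 3 0 (by decide) (by decide) (by decide) h23 (by linarith)
  · exact win 0 1 3 (by decide) (by decide) (by decide) h01 h03
  · exact win 0 1 2 (by decide) (by decide) (by decide) h01 h02
  · exact win 0 1 2 (by decide) (by decide) (by decide) h01 h02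

/-- Any real matrix of rank at most `2` factors through two coordinates. -/
lemma factor_of_rank_le_two {N : ℕ} (M : Matrix (Fin N) (Fin N) ℝ) (h : M.rank ≤ 2) :
    ∃ X Y : Fin N → Fin 2 → ℝ, ∀ i j, M i j = X i 0 * Y j 0 + X i 1 * Y j 1 := by
  classical
  set W : Submodule ℝ (Fin N → ℝ) := Submodule.span ℝ (Set.range Mᵀ) with hWdef
  have hd : Module.finrank ℝ W ≤ 2 := by
    rw [Matrix.rank_eq_finrank_span_cols] at h
    exact h
  obtain ⟨v₁, v₂, hle⟩ : ∃ v₁ v₂ : Fin N → ℝ, W ≤ Submodule.span ℝ {v₁, v₂} := by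
    let b := Module.finBasis ℝ W
    set d := Module.finrank ℝ W with hd'
    let v : Fin 2 → (Fin N → ℝ) := fun t =>
      if h2 : (t : ℕ) < d then ((b ⟨t, h2⟩ : W) : Fin N → ℝ) else 0
    refine ⟨v 0, v 1, fun w hw => ?_⟩
    have hrep : (⟨w, hw⟩ : W) = ∑ s : Fin d, b.repr ⟨w, hw⟩ s • b s :=
      (b.sum_repr ⟨w, hw⟩).symm
    have hw' : w = ∑ s : Fin d, b.repr ⟨w, hw⟩ s • ((b s : W) : Fin N → ℝ) := by
      have := congrArg (Subtype.val) hrep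
      refine this.trans ?_
      rw [Submodule.coe_sum]
      simp only [Submodule.coe_smul]
    rw [hw']
    refine Submodule.sum_mem _ fun s _ => Submodule.smul_mem _ _ ?_
    have hv : ((b s : W) : Fin N → ℝ) = v (Fin.castLE hd s) := by
      simp only [v]
      rw [dif_pos (by exact s.isLt)]
      congr 1
    rw [hv]
    have h2 : Fin.castLE hd s = 0 ∨ Fin.castLE hd s = 1 := by omega
    rcases h2 with h | h <;> rw [h] <;> exact Submodule.subset_span (by simp)
  have hcol : ∀ j, (fun i => M i j) ∈ W := fun j =>
    Submodule.subset_span ⟨j, rfl⟩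
  choose p q hpq using fun j => Submodule.mem_span_pair.mp (hle (hcol j))
  refine ⟨fun i t => ![v₁ i, v₂ i] t, fun j t => ![p j, q j] t, fun i j => ?_⟩
  have := congrFun (hpq j) i
  simp only [Pi.add_apply, Pi.smul_apply, smul_eq_mul] at this
  simp only [Matrix.cons_val_zero, Matrix.cons_val_one, Matrix.head_cons]
  linarith [this]

lemma cos_mono_aux {N m : ℕ} (hN : 4 ≤ N) (hm1 : 1 ≤ m) (hm2 : 2 * m ≤ N) :
    Real.cos (2 * π * m / N) ≤ Real.cos (2 * π / N) := by
  have hNpos : (0 : ℝ) < N := by positivity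
  have hπ := Real.pi_pos
  have hm1' : (1 : ℝ) ≤ (m : ℝ) := by exact_mod_cast hm1
  have hm2' : 2 * (m : ℝ) ≤ N := by exact_mod_cast hm2
  apply Real.cos_le_cos_of_nonneg_of_le_pi
  · positivity
  · rw [div_le_iff₀ hNpos]
    nlinarith
  · rw [div_le_div_iff₀ hNpos hNpos]
    nlinarith [mul_nonneg (mul_nonneg (by linarith : (0:ℝ) ≤ 2 * π)
      (by linarith : (0:ℝ) ≤ (m : ℝ) - 1)) hNpos.le]

lemma cos_off {N : ℕ} (hN : 4 ≤ N) {k : ℕ} (hk1 : 1 ≤ k) (hk2 : k < N) :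
    Real.cos (2 * π * k / N) ≤ Real.cos (2 * π / N) := by
  have hNpos : (0 : ℝ) < N := by positivity
  rcases le_or_gt (2 * k) N with h | h
  · exact cos_mono_aux hN hk1 h
  · have hkN : k ≤ N := le_of_lt hk2
    have heq : 2 * π * k / N = 2 * π - 2 * π * ((N - k : ℕ) : ℝ) / N := by
      push_cast [Nat.cast_sub hkN]
      field_simp
      ring
    rw [heq, Real.cos_two_pi_sub]
    exact cos_mono_aux hN (by omega) (by omega)

/-- for `N ≥ 4`, the `N × N` signed identity matrix (`+1` on the diagonal, `-1`
off the diagonal) has VC dimension one and sign rank `3`. -/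
theorem signedIdentity_vcdim_eq_one_and_signRank_eq_three
    (N : ℕ) (hN : 4 ≤ N)
    (S : Matrix (Fin N) (Fin N) ℝ)
    (hS : ∀ i j, S i j = if i = j then 1 else -1) :
    VCdim S = 1 ∧ signRank S = 3 := by
  have hNpos : (0 : ℝ) < N := by positivity
  have hπ := Real.pi_pos
  constructor
  · -- VC dimension
    have c0 : Fin N := ⟨0, by omega⟩
    set Kv := {k | ∃ T : Finset (Fin N), T.card = k ∧ Shattered S T} with hKv
    have h1mem : 1 ∈ Kv := by
      refine ⟨{⟨0, by omega⟩}, Finset.card_singleton _, fun v hv => ?_⟩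
      rcases hv ⟨0, by omega⟩ (Finset.mem_singleton_self _) with h | h
      · refine ⟨⟨0, by omega⟩, fun c hc => ?_⟩
        rw [Finset.mem_singleton] at hc
        subst hc
        rw [hS, if_pos rfl, h]
      · refine ⟨⟨1, by omega⟩, fun c hc => ?_⟩
        rw [Finset.mem_singleton] at hc
        subst hc
        rw [hS, if_neg (by simp [Fin.ext_iff]), h]
    have hub : ∀ k ∈ Kv, k ≤ 1 := by
      rintro k ⟨T, hT, hsh⟩
      by_contra hk2
      push_neg at hk2
      obtain ⟨a, ha, b, hb, hab⟩ := Finset.one_lt_card.mp (hT ▸ hk2)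
      obtain ⟨r, hr⟩ := hsh (fun _ => 1) (fun c _ => Or.inl rfl)
      have h1 := hr a ha
      have h2 := hr b hb
      rw [hS] at h1 h2
      have ha' : r = a := by
        by_contra hc
        rw [if_neg hc] at h1
        norm_num at h1
      have hb' : r = b := by
        by_contra hc
        rw [if_neg hc] at h2
        norm_num at h2
      exact hab (ha' ▸ hb')
    exact le_antisymm (csSup_le ⟨1, h1mem⟩ hub) (le_csSup ⟨1, hub⟩ h1mem)
  · -- sign rank
    set Kr := {k | ∃ M : Matrix (Fin N) (Fin N) ℝ,
      (∀ i j, 0 < M i j * S i j) ∧ M.rank = k} with hKr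
    -- lower bound : every realization has rank at least 3
    have hlow : ∀ k ∈ Kr, 3 ≤ k := by
      rintro k ⟨M, hM, rfl⟩
      by_contra hlt
      push_neg at hlt
      obtain ⟨X, Y, hXY⟩ := factor_of_rank_le_two M (by omega)
      have hdiag : ∀ i, 0 < M i i := by
        intro i
        have := hM i i
        rw [hS, if_pos rfl, mul_one] at this
        exact this
      have hoff : ∀ i j, i ≠ j → M i j < 0 := by
        intro i j hij
        have := hM i j
        rw [hS, if_neg hij] at this
        nlinarith
      have he : ∀ s t : Fin 4, s ≠ t →
          (⟨s.val, lt_of_lt_of_le s.isLt hN⟩ : Fin N) ≠ ⟨t.val, lt_of_lt_of_le t.isLt hN⟩ := by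
        intro s t h hc
        have hv := congrArg Fin.val hc
        simp only at hv
        exact h (Fin.ext hv)
      exact planar_key
        (A := fun s : Fin 4 => X ⟨s.val, lt_of_lt_of_le s.isLt hN⟩ 0)
        (B := fun s : Fin 4 => X ⟨s.val, lt_of_lt_of_le s.isLt hN⟩ 1)
        (C := fun t : Fin 4 => Y ⟨t.val, lt_of_lt_of_le t.isLt hN⟩ 0)
        (D := fun t : Fin 4 => Y ⟨t.val, lt_of_lt_of_le t.isLt hN⟩ 1)
        (fun s => by rw [← hXY]; exact hdiag _)
        (fun s t hst => by rw [← hXY]; exact hoff _ _ (he s t hst))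
    -- upper bound : an explicit rank-3 realization
    set t0 : ℝ := (1 + Real.cos (2 * π / N)) / 2 with ht0
    set A : Matrix (Fin N) (Fin 3) ℝ :=
      Matrix.of fun i t => ![Real.cos (2 * π * (i.val : ℝ) / N),
        Real.sin (2 * π * (i.val : ℝ) / N), 1] t with hA
    set B : Matrix (Fin 3) (Fin N) ℝ :=
      Matrix.of fun t j => ![Real.cos (2 * π * (j.val : ℝ) / N),
        Real.sin (2 * π * (j.val : ℝ) / N), -t0] t with hB
    have hAB : ∀ i j, (A * B) i j
        = Real.cos (2 * π * (i.val : ℝ) / N - 2 * π * (j.val : ℝ) / N) - t0 := by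
      intro i j
      rw [Matrix.mul_apply, Fin.sum_univ_three, Real.cos_sub]
      simp [hA, hB]
      ring
    have hcos1 : Real.cos (2 * π / N) < 1 := by
      refine lt_of_le_of_ne (Real.cos_le_one _) ?_
      intro hc
      have hp : (0:ℝ) < 2 * π / N := by positivity
      have hN4 : (4:ℝ) ≤ N := by exact_mod_cast hN
      have h1 : -(2 * π) < 2 * π / N := by linarith
      have h2 : 2 * π / N < 2 * π := by
        rw [div_lt_iff₀ hNpos]
        nlinarith
      have hz := (Real.cos_eq_one_iff_of_lt_of_lt h1 h2).mp hc
      linarith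
    have hkey : ∀ a b : Fin N, (b.val : ℕ) < a.val →
        Real.cos (2 * π * (a.val : ℝ) / N - 2 * π * (b.val : ℝ) / N)
          ≤ Real.cos (2 * π / N) := by
      intro a b hab
      have hcast : ((a.val - b.val : ℕ) : ℝ) = (a.val : ℝ) - b.val :=
        Nat.cast_sub (le_of_lt hab)
      have h1 : 2 * π * (a.val : ℝ) / N - 2 * π * (b.val : ℝ) / N
          = 2 * π * ((a.val - b.val : ℕ) : ℝ) / N := by
        rw [hcast]; ring
      rw [h1]
      have := a.isLt
      exact cos_off hN (by omega) (by omega)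
    have hcond : ∀ i j, 0 < (A * B) i j * S i j := by
      intro i j
      rw [hS, hAB]
      by_cases hij : i = j
      · subst hij
        rw [if_pos rfl, sub_self, Real.cos_zero, mul_one]
        rw [ht0]
        linarith
      · rw [if_neg hij]
        have hb : Real.cos (2 * π * (i.val : ℝ) / N - 2 * π * (j.val : ℝ) / N)
            ≤ Real.cos (2 * π / N) := by
          rcases Nat.lt_or_ge j.val i.val with h | h
          · exact hkey i j h
          · have hlt : i.val < j.val := by
              rcases Nat.lt_or_ge i.val j.val with h' | h'
              · exact h'
              · exact absurd (Fin.ext (le_antisymm h h')) hij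
            have hneg : 2 * π * (i.val : ℝ) / N - 2 * π * (j.val : ℝ) / N
                = -(2 * π * (j.val : ℝ) / N - 2 * π * (i.val : ℝ) / N) := by ring
            rw [hneg, Real.cos_neg]
            exact hkey j i hlt
        rw [ht0] at *
        nlinarith
    have hmem : (A * B).rank ∈ Kr := ⟨A * B, hcond, rfl⟩
    have hub2 : (A * B).rank ≤ 3 :=
      le_trans (Matrix.rank_mul_le_right A B)
        (le_trans (Matrix.rank_le_card_height B) (by simp))
    have hrank3 : (A * B).rank = 3 := le_antisymm hub2 (hlow _ hmem)
    have h3mem : 3 ∈ Kr := hrank3 ▸ hmem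
    exact le_antisymm (Nat.sInf_le h3mem) (le_csInf ⟨3, h3mem⟩ hlow)
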